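/- Let ε_t → 0, let α^(ε_t) ∈ [1,A]^n be smoothed autobidding equilibria for mechanism M ∈ {GSP, VCG} converging to a limit α*, and let the induced distributions π^(ε_t) over allocations converge (pointwise on the finite set of allocations) to a limit distribution π*. Then (α*, π*) is an autobidding equilibrium of the original auction: every allocation in the support of π* is valid under the limit bids b*_{ij} = α*_i v_{ij}; V_i(π*) ≥ P_i^M(π*, b*) for every bidder i; and α*_i = A for every bidder i with V_i(π*) > P_i^M(π*, b*). -/

import Mathlib

open Finset MeasureTheory

namespace SponsoredShopping

noncomputable section

/-- An item is a pair `(i, j)`: bidder `i`'s `j`-th item. -/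
abbrev Item (n m : ℕ) : Type := Fin n × Fin m

/-- An allocation assigns to each rank `k` (0-based) an item. -/
abbrev Alloc (n m : ℕ) : Type := Fin (n * m) ≃ Item n m

/-- Maximum of `f` over a finite set, with value `0` on the empty set. -/
def fmax {ι : Type*} (s : Finset ι) (f : ι → ℝ) : ℝ :=
  (s.sup fun i => (f i : WithBot ℝ)).unbotD 0

variable {n m : ℕ}

/-- An allocation is valid under bids `b` if bids are nonincreasing along ranks. -/
def ValidUnder (b : Item n m → ℝ) (a : Alloc n m) : Prop :=
  ∀ k k' : Fin (n * m), k ≤ k' → b (a k') ≤ b (a k)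

/-- The value of bidder `i` under allocation `a`
(`c k` is the CTR of slot `k`, with `c k = 0` for `k ≥ K`). -/
def bidderValue (c : ℕ → ℝ) (v : Item n m → ℝ) (a : Alloc n m) (i : Fin n) : ℝ :=
  ∑ k : Fin (n * m), if (a k).1 = i then c k * v (a k) else 0

/-- Social welfare of an allocation. -/
def wel (c : ℕ → ℝ) (v : Item n m → ℝ) (a : Alloc n m) : ℝ :=
  ∑ k : Fin (n * m), c k * v (a k)

/-- Optimal social welfare. -/
def welOpt (c : ℕ → ℝ) (v : Item n m → ℝ) : ℝ :=
  fmax (univ : Finset (Alloc n m)) (wel c v)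

/-- GSP per-click price of the item ranked `k`: highest bid among lower-ranked
items belonging to other bidders (`0` if none). -/
def gspPrice (b : Item n m → ℝ) (a : Alloc n m) (k : Fin (n * m)) : ℝ :=
  fmax (univ.filter fun k' : Fin (n * m) => k < k' ∧ (a k').1 ≠ (a k).1)
    (fun k' => b (a k'))

/-- Total GSP payment of bidder `i`. -/
def gspPay (c : ℕ → ℝ) (b : Item n m → ℝ) (a : Alloc n m) (i : Fin n) : ℝ :=
  ∑ k : Fin (n * m), if (a k).1 = i then c k * gspPrice b a k else 0

/-- Bid-welfare of an allocation. -/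
def bidWelfare (c : ℕ → ℝ) (b : Item n m → ℝ) (a : Alloc n m) : ℝ :=
  ∑ k : Fin (n * m), c k * b (a k)

/-- Bids with bidder `i`'s bids zeroed out. -/
def exclBids (b : Item n m → ℝ) (i : Fin n) : Item n m → ℝ :=
  fun x => if x.1 = i then 0 else b x

/-- Bid-welfare obtained by bidders other than `i` in allocation `a`. -/
def othersWelfare (c : ℕ → ℝ) (b : Item n m → ℝ) (a : Alloc n m) (i : Fin n) : ℝ :=
  ∑ k : Fin (n * m), if (a k).1 ≠ i then c k * b (a k) else 0

/-- Optimal counterfactual bid-welfare without bidder `i`. -/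
def woptWithout (c : ℕ → ℝ) (b : Item n m → ℝ) (i : Fin n) : ℝ :=
  fmax (univ : Finset (Alloc n m)) (fun a' => bidWelfare c (exclBids b i) a')

/-- VCG payment of bidder `i`. -/
def vcgPay (c : ℕ → ℝ) (b : Item n m → ℝ) (a : Alloc n m) (i : Fin n) : ℝ :=
  woptWithout c b i - othersWelfare c b a i

/-- The two mechanisms considered. -/
inductive Mech | gsp | vcg

/-- Payment of bidder `i` under mechanism `M`. -/
def pay : Mech → (ℕ → ℝ) → (Item n m → ℝ) → Alloc n m → Fin n → ℝ
  | .gsp => gspPay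
  | .vcg => vcgPay

/-- `S_k(a)`: the set of items assigned to the first `k` slots in `a`. -/
def topk (a : Alloc n m) (k : ℕ) : Finset (Item n m) :=
  (univ.filter fun r : Fin (n * m) => (r : ℕ) < k).image a

/-- The (unnormalized) uniform measure on the cube `[0, ε]^{items}`. -/
def cube (n m : ℕ) (ε : ℝ) : Measure (Item n m → ℝ) :=
  Measure.pi fun _ => volume.restrict (Set.Icc (0 : ℝ) ε)

/-- Perturbed bids `b̃_{ij} = α_i v_{ij} + ξ_{ij}`. -/
def pert (α : Fin n → ℝ) (v : Item n m → ℝ) (ξ : Item n m → ℝ) : Item n m → ℝ :=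
  fun x => α x.1 * v x + ξ x

/-- The rank (0-based slot) of item `x` under bids `b`: the number of items with
strictly higher bids.  When bids are tie-free this is the position of `x` in the
unique valid allocation. -/
def rnk (b : Item n m → ℝ) (x : Item n m) : ℕ :=
  (univ.filter fun y : Item n m => b x < b y).card

/-- The value of bidder `i` under the (a.s. unique) valid allocation for bids `b`. -/
def valBid (c : ℕ → ℝ) (v : Item n m → ℝ) (b : Item n m → ℝ) (i : Fin n) : ℝ :=
  ∑ j : Fin m, c (rnk b (i, j)) * v (i, j)

/-- GSP payment of bidder `i` under the (a.s. unique) valid allocation for bids `b`. -/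
def gspPayBid (c : ℕ → ℝ) (b : Item n m → ℝ) (i : Fin n) : ℝ :=
  ∑ j : Fin m, c (rnk b (i, j)) *
    fmax (univ.filter fun y : Item n m => y.1 ≠ i ∧ b y < b (i, j)) b

/-- Bid-welfare of bidders other than `i` under the (a.s. unique) valid allocation. -/
def othersWelfareBid (c : ℕ → ℝ) (b : Item n m → ℝ) (i : Fin n) : ℝ :=
  ∑ x : Item n m, if x.1 ≠ i then c (rnk b x) * b x else 0

/-- VCG payment of bidder `i` under the (a.s. unique) valid allocation for bids `b`. -/
def vcgPayBid (c : ℕ → ℝ) (b : Item n m → ℝ) (i : Fin n) : ℝ :=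
  woptWithout c b i - othersWelfareBid c b i

/-- Payment under mechanism `M` as a function of bids alone. -/
def payBid : Mech → (ℕ → ℝ) → (Item n m → ℝ) → Fin n → ℝ
  | .gsp => gspPayBid
  | .vcg => vcgPayBid

/-- Smoothed expected value `𝒱_i^ε(α)` of bidder `i`. -/
def sVal (c : ℕ → ℝ) (v : Item n m → ℝ) (ε : ℝ) (α : Fin n → ℝ) (i : Fin n) : ℝ :=
  (ε ^ (n * m))⁻¹ * ∫ ξ, valBid c v (pert α v ξ) i ∂(cube n m ε)

/-- Smoothed expected payment `𝒫_i^{M,ε}(α)` of bidder `i`. -/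
def sPay (M : Mech) (c : ℕ → ℝ) (v : Item n m → ℝ) (ε : ℝ) (α : Fin n → ℝ)
    (i : Fin n) : ℝ :=
  (ε ^ (n * m))⁻¹ * ∫ ξ, payBid M c (pert α v ξ) i ∂(cube n m ε)

/-- The induced distribution over allocations in the smoothed game:
the probability that `a` is the realized (valid) allocation. -/
def inducedDist (v : Item n m → ℝ) (ε : ℝ) (α : Fin n → ℝ) (a : Alloc n m) : ℝ :=
  (ε ^ (n * m))⁻¹ * ((cube n m ε) {ξ | ValidUnder (pert α v ξ) a}).toReal

section Fmax
variable {ι : Type*} {s : Finset ι} {f g : ι → ℝ} {M δ : ℝ}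

lemma le_fmax {x : ι} (hx : x ∈ s) : f x ≤ fmax s f := by
  have h := Finset.le_sup (f := fun i => (f i : WithBot ℝ)) hx
  unfold fmax
  rcases hsup : s.sup (fun i => (f i : WithBot ℝ)) with _ | r
  · rw [hsup] at h; exact absurd h (WithBot.not_coe_le_bot _)
  · rw [hsup] at h
    exact (WithBot.coe_le_coe.mp h)

lemma fmax_empty : fmax (∅ : Finset ι) f = 0 := by simp [fmax]

lemma fmax_le' (hs : s.Nonempty) (h : ∀ x ∈ s, f x ≤ M) : fmax s f ≤ M := by
  obtain ⟨x, hx⟩ := hs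
  unfold fmax
  rcases hsup : s.sup (fun i => (f i : WithBot ℝ)) with _ | r
  · have h2 := Finset.le_sup (f := fun i => (f i : WithBot ℝ)) hx
    rw [hsup] at h2; exact absurd h2 (WithBot.not_coe_le_bot _)
  · have h2 : s.sup (fun i => (f i : WithBot ℝ)) ≤ (M : WithBot ℝ) :=
      Finset.sup_le fun y hy => WithBot.coe_le_coe.mpr (h y hy)
    rw [hsup] at h2
    exact (WithBot.coe_le_coe.mp h2)

lemma fmax_le (h0 : 0 ≤ M) (h : ∀ x ∈ s, f x ≤ M) : fmax s f ≤ M := by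
  rcases s.eq_empty_or_nonempty with rfl | hs
  · simpa [fmax_empty] using h0
  · exact fmax_le' hs h

lemma fmax_nonneg (h : ∀ x ∈ s, 0 ≤ f x) : 0 ≤ fmax s f := by
  rcases s.eq_empty_or_nonempty with rfl | hs
  · simp [fmax_empty]
  · obtain ⟨x, hx⟩ := hs
    exact (h x hx).trans (le_fmax hx)

lemma fmax_sub_le (hδ : 0 ≤ δ) (h : ∀ x ∈ s, f x ≤ g x + δ) :
    fmax s f ≤ fmax s g + δ := by
  rcases s.eq_empty_or_nonempty with rfl | hs
  · simpa [fmax_empty] using hδ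
  · exact fmax_le' hs fun x hx => (h x hx).trans (add_le_add_left (le_fmax hx) δ)

lemma abs_fmax_sub_fmax_le (hδ : 0 ≤ δ) (h : ∀ x ∈ s, |f x - g x| ≤ δ) :
    |fmax s f - fmax s g| ≤ δ := by
  rw [abs_le]
  constructor
  · have := fmax_sub_le (f := g) (g := f) hδ fun x hx => by
      have := (abs_le.mp (h x hx)).1; linarith
    linarith
  · have := fmax_sub_le (f := f) (g := g) hδ fun x hx => by
      have := (abs_le.mp (h x hx)).2; linarith
    linarith

end Fmax
section Comb
variable {n m : ℕ}

lemma alloc_nonempty (n m : ℕ) : Nonempty (Alloc n m) :=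
  ⟨(finProdFinEquiv : Fin n × Fin m ≃ Fin (n * m)).symm⟩

lemma exists_valid (b : Item n m → ℝ) : ∃ a : Alloc n m, ValidUnder b a := by
  obtain ⟨e⟩ := alloc_nonempty n m
  set f : Fin (n * m) → ℝ := fun k => -(b (e k)) with hf
  refine ⟨((Tuple.sort f : Equiv.Perm (Fin (n * m))) : Fin (n * m) ≃ Fin (n * m)).trans e, ?_⟩
  intro k k' hkk'
  have h := Tuple.monotone_sort f hkk'
  simp only [Function.comp_apply, hf] at h
  simpa using h

lemma strictAnti_of_valid {b : Item n m → ℝ} {a : Alloc n m} (hb : Function.Injective b)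
    (ha : ValidUnder b a) {k k' : Fin (n * m)} (hk : k < k') : b (a k') < b (a k) := by
  refine lt_of_le_of_ne (ha k k' hk.le) fun h => ?_
  exact absurd (a.injective (hb h)) (ne_of_gt hk)

lemma rnk_apply {b : Item n m → ℝ} {a : Alloc n m} (hb : Function.Injective b)
    (ha : ValidUnder b a) (k : Fin (n * m)) : rnk b (a k) = (k : ℕ) := by
  unfold rnk
  have hset : (univ.filter fun y : Item n m => b (a k) < b y)
      = (univ.filter fun k' : Fin (n * m) => k' < k).image a := by
    ext y
    simp only [Finset.mem_filter, Finset.mem_univ, true_and, Finset.mem_image]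
    constructor
    · intro hy
      refine ⟨a.symm y, ?_, a.apply_symm_apply y⟩
      by_contra h
      push_neg at h
      have h2 := ha k (a.symm y) h
      rw [a.apply_symm_apply] at h2
      exact absurd hy (not_lt.2 h2)
    · rintro ⟨k', hk', rfl⟩
      exact strictAnti_of_valid hb ha hk'
  rw [hset, Finset.card_image_of_injective _ a.injective]
  have : (univ.filter fun k' : Fin (n * m) => k' < k) = Finset.Iio k := by
    ext k'; simp
  rw [this, Fin.card_Iio]

lemma rnk_symm {b : Item n m → ℝ} {a : Alloc n m} (hb : Function.Injective b)
    (ha : ValidUnder b a) (x : Item n m) : rnk b x = (a.symm x : ℕ) := by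
  have := rnk_apply hb ha (a.symm x)
  rwa [a.apply_symm_apply] at this

lemma sum_item_eq (a : Alloc n m) (g : Fin (n * m) → Item n m → ℝ) :
    ∑ k : Fin (n * m), g k (a k) = ∑ x : Item n m, g (a.symm x) x := by
  have := Equiv.sum_comp a (fun x => g (a.symm x) x)
  simp only [Equiv.symm_apply_apply] at this
  exact this

lemma sum_item_fst (i : Fin n) (h : Item n m → ℝ) :
    ∑ x : Item n m, (if x.1 = i then h x else 0) = ∑ j : Fin m, h (i, j) := by
  rw [Fintype.sum_prod_type]
  rw [Finset.sum_eq_single_of_mem i (Finset.mem_univ i)]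
  · simp
  · intro i' _ hi'
    simp [hi']

end Comb
section Ident
variable {n m : ℕ}

lemma valid_unique {b : Item n m → ℝ} (hb : Function.Injective b) {a a' : Alloc n m}
    (ha : ValidUnder b a) (ha' : ValidUnder b a') : a = a' := by
  have hsymm : ∀ x, a.symm x = a'.symm x := by
    intro x
    have h1 := rnk_symm hb ha x
    have h2 := rnk_symm hb ha' x
    exact Fin.ext (h1 ▸ h2 ▸ rfl)
  refine Equiv.ext fun k => ?_
  have h := hsymm (a k)
  rw [a.symm_apply_apply] at h
  have h2 := congrArg a' h
  rw [a'.apply_symm_apply] at h2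
  exact h2.symm

lemma valBid_eq {c : ℕ → ℝ} {v b : Item n m → ℝ} {a : Alloc n m}
    (hb : Function.Injective b) (ha : ValidUnder b a) (i : Fin n) :
    valBid c v b i = bidderValue c v a i := by
  unfold valBid bidderValue
  rw [sum_item_eq a (fun k x => if x.1 = i then c k * v x else 0)]
  rw [sum_item_fst i (fun x => c ((a.symm x : Fin (n * m)) : ℕ) * v x)]
  refine Finset.sum_congr rfl fun j _ => ?_
  rw [rnk_symm hb ha (i, j)]

lemma gspPrice_eq {b : Item n m → ℝ} {a : Alloc n m}
    (hb : Function.Injective b) (ha : ValidUnder b a) (k : Fin (n * m)) :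
    gspPrice b a k
      = fmax (univ.filter fun y : Item n m => y.1 ≠ (a k).1 ∧ b y < b (a k)) b := by
  unfold gspPrice
  have hset : (univ.filter fun y : Item n m => y.1 ≠ (a k).1 ∧ b y < b (a k))
      = (univ.filter fun k' : Fin (n * m) => k < k' ∧ (a k').1 ≠ (a k).1).image a := by
    ext y
    simp only [Finset.mem_filter, Finset.mem_univ, true_and, Finset.mem_image]
    constructor
    · rintro ⟨hy1, hy2⟩
      refine ⟨a.symm y, ⟨?_, by rw [a.apply_symm_apply]; exact hy1⟩, a.apply_symm_apply y⟩
      by_contra h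
      push_neg at h
      have h2 := ha (a.symm y) k h
      rw [a.apply_symm_apply] at h2
      exact absurd hy2 (not_lt.2 h2)
    · rintro ⟨k', ⟨hk1, hk2⟩, rfl⟩
      exact ⟨hk2, strictAnti_of_valid hb ha hk1⟩
  rw [hset]
  unfold fmax
  rw [Finset.sup_image]
  rfl

lemma gspPay_eq {c : ℕ → ℝ} {b : Item n m → ℝ} {a : Alloc n m}
    (hb : Function.Injective b) (ha : ValidUnder b a) (i : Fin n) :
    gspPayBid c b i = gspPay c b a i := by
  unfold gspPayBid gspPay
  have h1 : ∀ k : Fin (n * m),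
      (if (a k).1 = i then c k * gspPrice b a k else 0)
        = (fun (k : Fin (n * m)) (x : Item n m) => if x.1 = i then
            c (k : ℕ) * fmax (univ.filter fun y : Item n m => y.1 ≠ x.1 ∧ b y < b x) b else 0) k (a k) := by
    intro k
    simp only []
    rw [gspPrice_eq hb ha k]
  rw [Finset.sum_congr rfl fun k _ => h1 k]
  rw [sum_item_eq a (fun (k : Fin (n * m)) (x : Item n m) => if x.1 = i then
        c (k : ℕ) * fmax (univ.filter fun y : Item n m => y.1 ≠ x.1 ∧ b y < b x) b else 0)]
  rw [sum_item_fst i (fun x => c ((a.symm x : Fin (n * m)) : ℕ)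
      * fmax (univ.filter fun y : Item n m => y.1 ≠ x.1 ∧ b y < b x) b)]
  refine Finset.sum_congr rfl fun j _ => ?_
  rw [rnk_symm hb ha (i, j)]

lemma othersWelfare_eq {c : ℕ → ℝ} {b : Item n m → ℝ} {a : Alloc n m}
    (hb : Function.Injective b) (ha : ValidUnder b a) (i : Fin n) :
    othersWelfareBid c b i = othersWelfare c b a i := by
  unfold othersWelfareBid othersWelfare
  rw [sum_item_eq a (fun k x => if x.1 ≠ i then c k * b x else 0)]
  refine Finset.sum_congr rfl fun x _ => ?_
  rw [rnk_symm hb ha x]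

lemma payBid_eq (M : Mech) {c : ℕ → ℝ} {b : Item n m → ℝ} {a : Alloc n m}
    (hb : Function.Injective b) (ha : ValidUnder b a) (i : Fin n) :
    payBid M c b i = pay M c b a i := by
  cases M
  · exact gspPay_eq hb ha i
  · show vcgPayBid c b i = vcgPay c b a i
    unfold vcgPayBid vcgPay
    rw [othersWelfare_eq hb ha i]

end Ident
section Lip
variable {n m : ℕ} {c : ℕ → ℝ} {b b' : Item n m → ℝ} {δ : ℝ}

lemma gspPay_lip (hc0 : ∀ k, 0 ≤ c k) (hc1 : ∀ k, c k ≤ 1)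
    (a : Alloc n m) (i : Fin n) (hδ : 0 ≤ δ) (h : ∀ x, |b x - b' x| ≤ δ) :
    |gspPay c b a i - gspPay c b' a i| ≤ (n * m : ℝ) * δ := by
  unfold gspPay
  rw [← Finset.sum_sub_distrib]
  refine (Finset.abs_sum_le_sum_abs _ _).trans ?_
  have hterm : ∀ k : Fin (n * m),
      |(if (a k).1 = i then c k * gspPrice b a k else 0)
        - (if (a k).1 = i then c k * gspPrice b' a k else 0)| ≤ δ := by
    intro k
    by_cases hk : (a k).1 = i
    · simp only [hk, if_true]
      rw [← mul_sub, abs_mul, abs_of_nonneg (hc0 k)]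
      have hp : |gspPrice b a k - gspPrice b' a k| ≤ δ :=
        abs_fmax_sub_fmax_le hδ fun k' _ => h (a k')
      calc c (k : ℕ) * |gspPrice b a k - gspPrice b' a k| ≤ 1 * δ :=
            mul_le_mul (hc1 k) hp (abs_nonneg _) zero_le_one
        _ = δ := one_mul δ
    · simp only [hk, if_false]
      simpa using hδ
  calc ∑ k : Fin (n * m), |(if (a k).1 = i then c k * gspPrice b a k else 0)
        - (if (a k).1 = i then c k * gspPrice b' a k else 0)|
      ≤ ∑ _k : Fin (n * m), δ := Finset.sum_le_sum fun k _ => hterm k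
    _ = (n * m : ℝ) * δ := by simp [Finset.sum_const, mul_comm]

lemma bidWelfare_lip (hc0 : ∀ k, 0 ≤ c k) (hc1 : ∀ k, c k ≤ 1)
    (a : Alloc n m) (hδ : 0 ≤ δ) (h : ∀ x, |b x - b' x| ≤ δ) :
    |bidWelfare c b a - bidWelfare c b' a| ≤ (n * m : ℝ) * δ := by
  unfold bidWelfare
  rw [← Finset.sum_sub_distrib]
  refine (Finset.abs_sum_le_sum_abs _ _).trans ?_
  calc ∑ k : Fin (n * m), |c k * b (a k) - c k * b' (a k)|
      ≤ ∑ _k : Fin (n * m), δ := by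
        refine Finset.sum_le_sum fun k _ => ?_
        rw [← mul_sub, abs_mul, abs_of_nonneg (hc0 k)]
        calc c (k : ℕ) * |b (a k) - b' (a k)| ≤ 1 * δ :=
              mul_le_mul (hc1 k) (h (a k)) (abs_nonneg _) zero_le_one
          _ = δ := one_mul δ
    _ = (n * m : ℝ) * δ := by simp [Finset.sum_const, mul_comm]

lemma exclBids_abs (i : Fin n) (h : ∀ x, |b x - b' x| ≤ δ) :
    ∀ x, |exclBids b i x - exclBids b' i x| ≤ δ := by
  intro x
  unfold exclBids
  by_cases hx : x.1 = i
  · simp only [hx, if_true]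
    simpa using (abs_nonneg (b x - b' x)).trans (h x)
  · simp only [hx, if_false]
    exact h x

lemma woptWithout_lip (hc0 : ∀ k, 0 ≤ c k) (hc1 : ∀ k, c k ≤ 1)
    (i : Fin n) (hδ : 0 ≤ δ) (h : ∀ x, |b x - b' x| ≤ δ) :
    |woptWithout c b i - woptWithout c b' i| ≤ (n * m : ℝ) * δ := by
  unfold woptWithout
  exact abs_fmax_sub_fmax_le (by positivity) fun a _ =>
    bidWelfare_lip hc0 hc1 a hδ (exclBids_abs i h)

lemma othersWelfare_lip (hc0 : ∀ k, 0 ≤ c k) (hc1 : ∀ k, c k ≤ 1)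
    (a : Alloc n m) (i : Fin n) (hδ : 0 ≤ δ) (h : ∀ x, |b x - b' x| ≤ δ) :
    |othersWelfare c b a i - othersWelfare c b' a i| ≤ (n * m : ℝ) * δ := by
  unfold othersWelfare
  rw [← Finset.sum_sub_distrib]
  refine (Finset.abs_sum_le_sum_abs _ _).trans ?_
  calc ∑ k : Fin (n * m), |(if (a k).1 ≠ i then c k * b (a k) else 0)
        - (if (a k).1 ≠ i then c k * b' (a k) else 0)|
      ≤ ∑ _k : Fin (n * m), δ := by
        refine Finset.sum_le_sum fun k _ => ?_
        by_cases hk : (a k).1 ≠ i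
        · rw [if_pos hk, if_pos hk]
          rw [← mul_sub, abs_mul, abs_of_nonneg (hc0 k)]
          calc c (k : ℕ) * |b (a k) - b' (a k)| ≤ 1 * δ :=
                mul_le_mul (hc1 k) (h (a k)) (abs_nonneg _) zero_le_one
            _ = δ := one_mul δ
        · rw [if_neg hk, if_neg hk]
          simpa using hδ
    _ = (n * m : ℝ) * δ := by simp [Finset.sum_const, mul_comm]

lemma pay_lip (M : Mech) (hc0 : ∀ k, 0 ≤ c k) (hc1 : ∀ k, c k ≤ 1)
    (a : Alloc n m) (i : Fin n) (hδ : 0 ≤ δ) (h : ∀ x, |b x - b' x| ≤ δ) :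
    |pay M c b a i - pay M c b' a i| ≤ (2 * (n * m) : ℝ) * δ := by
  have hnm : (0 : ℝ) ≤ (n * m : ℝ) * δ := by positivity
  cases M
  · show |gspPay c b a i - gspPay c b' a i| ≤ _
    have := gspPay_lip hc0 hc1 a i hδ h
    nlinarith
  · show |(woptWithout c b i - othersWelfare c b a i)
        - (woptWithout c b' i - othersWelfare c b' a i)| ≤ _
    have h1 := woptWithout_lip (b := b) (b' := b') hc0 hc1 i hδ h
    have h2 := othersWelfare_lip (b := b) (b' := b') hc0 hc1 a i hδ h
    have := abs_sub (woptWithout c b i - woptWithout c b' i)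
      (othersWelfare c b a i - othersWelfare c b' a i)
    have heq : (woptWithout c b i - othersWelfare c b a i)
        - (woptWithout c b' i - othersWelfare c b' a i)
        = (woptWithout c b i - woptWithout c b' i)
          - (othersWelfare c b a i - othersWelfare c b' a i) := by ring
    rw [heq]
    calc |(woptWithout c b i - woptWithout c b' i)
          - (othersWelfare c b a i - othersWelfare c b' a i)|
        ≤ |woptWithout c b i - woptWithout c b' i|
          + |othersWelfare c b a i - othersWelfare c b' a i| := abs_sub _ _
      _ ≤ (n * m : ℝ) * δ + (n * m : ℝ) * δ := add_le_add h1 h2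
      _ = (2 * (n * m) : ℝ) * δ := by ring

lemma pay_cont (M : Mech) (hc0 : ∀ k, 0 ≤ c k) (hc1 : ∀ k, c k ≤ 1)
    (a : Alloc n m) (i : Fin n) :
    Continuous fun b : Item n m → ℝ => pay M c b a i := by
  rw [Metric.continuous_iff]
  intro b r hr
  set C : ℝ := (2 * (n * m) : ℝ) with hC
  have hC0 : 0 ≤ C := by positivity
  refine ⟨r / (C + 1), by positivity, fun b' hb' => ?_⟩
  have hd : ∀ x, |b' x - b x| ≤ dist b' b := fun x => by
    simpa [Real.dist_eq] using dist_le_pi_dist b' b x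
  have h1 : |pay M c b' a i - pay M c b a i| ≤ C * dist b' b :=
    pay_lip M hc0 hc1 a i dist_nonneg hd
  have h2 : C * dist b' b ≤ C * (r / (C + 1)) :=
    mul_le_mul_of_nonneg_left hb'.le hC0
  have h3 : C * (r / (C + 1)) < r := by
    rw [div_eq_mul_inv]
    have : C / (C + 1) < 1 := (div_lt_one (by positivity)).2 (by linarith)
    calc C * (r * (C + 1)⁻¹) = (C / (C + 1)) * r := by ring
      _ < 1 * r := by nlinarith
      _ = r := one_mul r
  calc dist (pay M c b' a i) (pay M c b a i) = |pay M c b' a i - pay M c b a i| :=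
        Real.dist_eq _ _
    _ < r := by linarith

end Lip
section MeasureInfra
variable {n m : ℕ}

/-- The noise box. -/
def nbox (n m : ℕ) (ε : ℝ) : Set (Item n m → ℝ) := Set.pi Set.univ fun _ => Set.Icc 0 ε

lemma nbox_measurable (n m : ℕ) (ε : ℝ) : MeasurableSet (nbox n m ε) :=
  MeasurableSet.univ_pi fun _ => measurableSet_Icc

instance restrict_Icc_finite (ε : ℝ) :
    IsFiniteMeasure ((volume : Measure ℝ).restrict (Set.Icc 0 ε)) :=
  ⟨by rw [Measure.restrict_apply_univ]; exact measure_Icc_lt_top⟩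

lemma cube_eq_restrict (n m : ℕ) (ε : ℝ) :
    cube n m ε = (volume : Measure (Item n m → ℝ)).restrict (nbox n m ε) := by
  rw [MeasureTheory.volume_pi]
  unfold cube nbox
  refine Measure.pi_eq fun s hs => ?_
  rw [Measure.restrict_apply (MeasurableSet.univ_pi hs)]
  rw [← Set.pi_inter_distrib]
  rw [Measure.pi_pi]
  exact Finset.prod_congr rfl fun x _ =>
    (Measure.restrict_apply (hs x)).symm

instance cube_finite (n m : ℕ) (ε : ℝ) : IsFiniteMeasure (cube n m ε) := by
  unfold cube
  infer_instance

lemma cube_univ (n m : ℕ) (ε : ℝ) :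
    cube n m ε Set.univ = ENNReal.ofReal ε ^ (n * m) := by
  unfold cube
  rw [Measure.pi_univ]
  simp only [Measure.restrict_apply_univ, Real.volume_Icc, sub_zero]
  rw [Finset.prod_const]
  congr 1
  simp [Finset.card_univ]

lemma cube_univ_toReal (n m : ℕ) {ε : ℝ} (hε : 0 ≤ ε) :
    (cube n m ε Set.univ).toReal = ε ^ (n * m) := by
  rw [cube_univ, ← ENNReal.ofReal_pow hε, ENNReal.toReal_ofReal (by positivity)]

lemma cube_nbox_compl (n m : ℕ) (ε : ℝ) : cube n m ε (nbox n m ε)ᶜ = 0 := by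
  rw [cube_eq_restrict, Measure.restrict_apply (nbox_measurable n m ε).compl]
  simp

lemma cube_le_volume (n m : ℕ) (ε : ℝ) (s : Set (Item n m → ℝ)) :
    cube n m ε s ≤ volume s := by
  rw [cube_eq_restrict]
  exact Measure.restrict_le_self _

lemma volume_tie_null (α : Fin n → ℝ) (v : Item n m → ℝ) {x y : Item n m} (hxy : x ≠ y) :
    (volume : Measure (Item n m → ℝ)) {ξ | pert α v ξ x = pert α v ξ y} = 0 := by
  set L : (Item n m → ℝ) →ₗ[ℝ] ℝ := (LinearMap.proj x : (Item n m → ℝ) →ₗ[ℝ] ℝ) - (LinearMap.proj y : (Item n m → ℝ) →ₗ[ℝ] ℝ) with hL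
  set d : ℝ := α y.1 * v y - α x.1 * v x with hd
  set ξ₀ : Item n m → ℝ := fun z => if z = x then d else 0 with hξ₀
  have hLξ₀ : L ξ₀ = d := by
    simp only [hL, LinearMap.sub_apply, LinearMap.proj_apply, hξ₀]
    simp [Ne.symm hxy]
  have hset : {ξ : Item n m → ℝ | pert α v ξ x = pert α v ξ y}
      = (fun ξ : Item n m → ℝ => ξ + -ξ₀) ⁻¹' ((LinearMap.ker L : Submodule ℝ (Item n m → ℝ)) : Set (Item n m → ℝ)) := by
    ext ξ
    simp only [Set.mem_setOf_eq, Set.mem_preimage, SetLike.mem_coe, LinearMap.mem_ker,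
      map_add, map_neg, hLξ₀]
    constructor
    · intro hp
      have : L ξ = d := by
        simp only [hL, LinearMap.sub_apply, LinearMap.proj_apply, hd]
        unfold pert at hp
        linarith
      rw [this]; ring
    · intro hp
      have hLd : L ξ = d := by linarith [hp]
      simp only [hL, LinearMap.sub_apply, LinearMap.proj_apply, hd] at hLd
      unfold pert
      linarith
  rw [hset]
  rw [measure_preimage_add_right]
  refine Measure.addHaar_submodule _ _ fun htop => ?_
  have h1 : L (fun z => if z = x then (1:ℝ) else 0) = 0 := by
    rw [← LinearMap.mem_ker, htop]; trivial
  simp only [hL, LinearMap.sub_apply, LinearMap.proj_apply] at h1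
  simp [Ne.symm hxy] at h1

end MeasureInfra
section Partition
variable {n m : ℕ}

/-- Tie set. -/
def ties (n m : ℕ) (α : Fin n → ℝ) (v : Item n m → ℝ) : Set (Item n m → ℝ) :=
  {ξ | ¬ Function.Injective (pert α v ξ)}

lemma ties_eq (α : Fin n → ℝ) (v : Item n m → ℝ) :
    ties n m α v = ⋃ (x : Item n m) (y : Item n m) (_ : x ≠ y),
      {ξ | pert α v ξ x = pert α v ξ y} := by
  ext ξ
  simp only [ties, Set.mem_setOf_eq, Set.mem_iUnion, Function.Injective]
  push_neg
  tauto

lemma measurable_pert_apply (α : Fin n → ℝ) (v : Item n m → ℝ) (x : Item n m) :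
    Measurable fun ξ : Item n m → ℝ => pert α v ξ x := by
  unfold pert
  exact (measurable_pi_apply x).const_add _

lemma ties_measurable (α : Fin n → ℝ) (v : Item n m → ℝ) :
    MeasurableSet (ties n m α v) := by
  rw [ties_eq]
  refine MeasurableSet.iUnion fun x => MeasurableSet.iUnion fun y =>
    MeasurableSet.iUnion fun _ => ?_
  exact measurableSet_eq_fun (measurable_pert_apply α v x) (measurable_pert_apply α v y)

lemma cube_ties_null (ε : ℝ) (α : Fin n → ℝ) (v : Item n m → ℝ) :
    cube n m ε (ties n m α v) = 0 := by
  rw [ties_eq]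
  refine measure_iUnion_null fun x => measure_iUnion_null fun y => measure_iUnion_null fun hxy => ?_
  exact le_antisymm ((cube_le_volume n m ε _).trans_eq (volume_tie_null α v hxy)) bot_le

lemma valid_measurable (α : Fin n → ℝ) (v : Item n m → ℝ) (a : Alloc n m) :
    MeasurableSet {ξ : Item n m → ℝ | ValidUnder (pert α v ξ) a} := by
  have : {ξ : Item n m → ℝ | ValidUnder (pert α v ξ) a}
      = ⋂ (k : Fin (n * m)) (k' : Fin (n * m)) (_ : k ≤ k'),
        {ξ | pert α v ξ (a k') ≤ pert α v ξ (a k)} := by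
    ext ξ
    simp only [Set.mem_setOf_eq, Set.mem_iInter, ValidUnder]
  rw [this]
  refine MeasurableSet.iInter fun k => MeasurableSet.iInter fun k' =>
    MeasurableSet.iInter fun _ => ?_
  exact measurableSet_le (measurable_pert_apply α v (a k')) (measurable_pert_apply α v (a k))

/-- The event cell for allocation `a`. -/
def cell (n m : ℕ) (ε : ℝ) (α : Fin n → ℝ) (v : Item n m → ℝ) (a : Alloc n m) :
    Set (Item n m → ℝ) :=
  ({ξ | ValidUnder (pert α v ξ) a} ∩ nbox n m ε) \ ties n m α v

lemma cell_measurable (ε : ℝ) (α : Fin n → ℝ) (v : Item n m → ℝ) (a : Alloc n m) :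
    MeasurableSet (cell n m ε α v a) :=
  ((valid_measurable α v a).inter (nbox_measurable n m ε)).diff (ties_measurable α v)

lemma cell_disjoint (ε : ℝ) (α : Fin n → ℝ) (v : Item n m → ℝ) :
    Pairwise (Function.onFun Disjoint (cell n m ε α v)) := by
  intro a a' haa'
  rw [Function.onFun, Set.disjoint_left]
  rintro ξ ⟨⟨hva, _⟩, hT⟩ ⟨⟨hva', _⟩, _⟩
  have hinj : Function.Injective (pert α v ξ) := not_not.mp hT
  exact haa' (valid_unique hinj hva hva')

lemma cell_union (ε : ℝ) (α : Fin n → ℝ) (v : Item n m → ℝ) :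
    (⋃ a : Alloc n m, cell n m ε α v a) = nbox n m ε \ ties n m α v := by
  ext ξ
  simp only [Set.mem_iUnion, cell, Set.mem_diff, Set.mem_inter_iff, Set.mem_setOf_eq]
  constructor
  · rintro ⟨a, ⟨⟨_, hbox⟩, hT⟩⟩
    exact ⟨hbox, hT⟩
  · rintro ⟨hbox, hT⟩
    obtain ⟨a, ha⟩ := exists_valid (pert α v ξ)
    exact ⟨a, ⟨⟨ha, hbox⟩, hT⟩⟩

lemma cube_cell_compl_null (ε : ℝ) (α : Fin n → ℝ) (v : Item n m → ℝ) :
    cube n m ε (⋃ a : Alloc n m, cell n m ε α v a)ᶜ = 0 := by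
  rw [cell_union]
  have hsub : (nbox n m ε \ ties n m α v)ᶜ ⊆ (nbox n m ε)ᶜ ∪ ties n m α v := by
    intro ξ hξ
    simp only [Set.mem_compl_iff, Set.mem_diff, not_and, not_not] at hξ
    by_cases hb : ξ ∈ nbox n m ε
    · exact Or.inr (hξ hb)
    · exact Or.inl hb
  refine measure_mono_null hsub ?_
  exact measure_union_null (cube_nbox_compl n m ε) (cube_ties_null ε α v)

lemma cube_cell_eq_valid (ε : ℝ) (α : Fin n → ℝ) (v : Item n m → ℝ) (a : Alloc n m) :
    cube n m ε (cell n m ε α v a) = cube n m ε {ξ | ValidUnder (pert α v ξ) a} := by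
  refine le_antisymm (measure_mono fun ξ hξ => hξ.1.1) ?_
  have hsub : {ξ | ValidUnder (pert α v ξ) a}
      ⊆ cell n m ε α v a ∪ ((nbox n m ε)ᶜ ∪ ties n m α v) := by
    intro ξ hξ
    by_cases hT : ξ ∈ ties n m α v
    · exact Or.inr (Or.inr hT)
    · by_cases hb : ξ ∈ nbox n m ε
      · exact Or.inl ⟨⟨hξ, hb⟩, hT⟩
      · exact Or.inr (Or.inl hb)
  calc cube n m ε {ξ | ValidUnder (pert α v ξ) a}
      ≤ cube n m ε (cell n m ε α v a ∪ ((nbox n m ε)ᶜ ∪ ties n m α v)) := measure_mono hsub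
    _ ≤ cube n m ε (cell n m ε α v a) + cube n m ε ((nbox n m ε)ᶜ ∪ ties n m α v) :=
        measure_union_le _ _
    _ = cube n m ε (cell n m ε α v a) := by
        rw [measure_union_null (cube_nbox_compl n m ε) (cube_ties_null ε α v), add_zero]

lemma cube_sum_cells (ε : ℝ) (α : Fin n → ℝ) (v : Item n m → ℝ) :
    ∑ a : Alloc n m, cube n m ε (cell n m ε α v a) = cube n m ε Set.univ := by
  have h1 : ∑ a : Alloc n m, cube n m ε (cell n m ε α v a)
      = cube n m ε (⋃ a : Alloc n m, cell n m ε α v a) := by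
    rw [MeasureTheory.measure_iUnion (cell_disjoint ε α v) (cell_measurable ε α v),
      tsum_fintype]
  rw [h1]
  have h2 := measure_add_measure_compl (μ := cube n m ε)
    ((MeasurableSet.iUnion (cell_measurable ε α v)))
  rw [cube_cell_compl_null ε α v, add_zero] at h2
  exact h2

end Partition
section PerT
variable {n m : ℕ} {c : ℕ → ℝ} {v : Item n m → ℝ} {α : Fin n → ℝ} {ε : ℝ}

lemma mem_cell {a : Alloc n m} {ξ : Item n m → ℝ} (h : ξ ∈ cell n m ε α v a) :
    Function.Injective (pert α v ξ) ∧ ValidUnder (pert α v ξ) a ∧ ∀ x, ξ x ∈ Set.Icc 0 ε := by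
  obtain ⟨⟨hva, hbox⟩, hT⟩ := h
  exact ⟨not_not.mp hT, hva, fun x => hbox x (Set.mem_univ x)⟩

lemma sum_cells_toReal (hε : 0 ≤ ε) :
    ∑ a : Alloc n m, (cube n m ε (cell n m ε α v a)).toReal = ε ^ (n * m) := by
  rw [← cube_univ_toReal n m hε, ← cube_sum_cells ε α v]
  rw [ENNReal.toReal_sum fun a _ => measure_ne_top _ _]

lemma restrict_cells (ε : ℝ) (α : Fin n → ℝ) (v : Item n m → ℝ) :
    (cube n m ε).restrict (⋃ a : Alloc n m, cell n m ε α v a) = cube n m ε := by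
  rw [Measure.restrict_congr_set (ae_eq_univ.mpr (cube_cell_compl_null ε α v)),
    Measure.restrict_univ]

lemma inducedDist_nonneg (hε : 0 < ε) (a : Alloc n m) : 0 ≤ inducedDist v ε α a := by
  unfold inducedDist
  positivity

lemma inducedDist_eq_cell (a : Alloc n m) :
    inducedDist v ε α a = (ε ^ (n * m))⁻¹ * (cube n m ε (cell n m ε α v a)).toReal := by
  unfold inducedDist
  rw [cube_cell_eq_valid]

lemma sum_inducedDist (hε : 0 < ε) : ∑ a : Alloc n m, inducedDist v ε α a = 1 := by
  have h : ∀ a : Alloc n m, inducedDist v ε α a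
      = (ε ^ (n * m))⁻¹ * (cube n m ε (cell n m ε α v a)).toReal := inducedDist_eq_cell
  rw [Finset.sum_congr rfl fun a _ => h a, ← Finset.mul_sum, sum_cells_toReal hε.le]
  rw [inv_mul_cancel₀ (by positivity)]

lemma continuous_pert (α : Fin n → ℝ) (v : Item n m → ℝ) :
    Continuous (pert α v) := by
  unfold pert
  exact continuous_pi fun x => continuous_const.add (continuous_apply x)

lemma sVal_eq (hε : 0 < ε) (i : Fin n) :
    sVal c v ε α i = ∑ a : Alloc n m, inducedDist v ε α a * bidderValue c v a i := by
  have hint : ∀ a : Alloc n m,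
      IntegrableOn (fun ξ => valBid c v (pert α v ξ) i) (cell n m ε α v a) (cube n m ε) := by
    intro a
    have heq : Set.EqOn (fun _ : Item n m → ℝ => bidderValue c v a i)
        (fun ξ => valBid c v (pert α v ξ) i) (cell n m ε α v a) := by
      intro ξ hξ
      obtain ⟨hinj, hva, _⟩ := mem_cell hξ
      exact (valBid_eq hinj hva i).symm
    exact IntegrableOn.congr_fun
      (integrableOn_const (measure_lt_top (cube n m ε) _).ne) heq
      (cell_measurable ε α v a)
  have key : ∫ ξ, valBid c v (pert α v ξ) i ∂(cube n m ε)
      = ∑ a : Alloc n m, (cube n m ε (cell n m ε α v a)).toReal * bidderValue c v a i := by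
    conv_lhs => rw [← restrict_cells ε α v]
    rw [MeasureTheory.integral_iUnion_fintype (cell_measurable ε α v)
      (cell_disjoint ε α v) hint]
    refine Finset.sum_congr rfl fun a _ => ?_
    have heq : Set.EqOn (fun ξ => valBid c v (pert α v ξ) i)
        (fun _ : Item n m → ℝ => bidderValue c v a i) (cell n m ε α v a) := by
      intro ξ hξ
      obtain ⟨hinj, hva, _⟩ := mem_cell hξ
      exact valBid_eq hinj hva i
    rw [setIntegral_congr_fun (cell_measurable ε α v a) heq, setIntegral_const, smul_eq_mul, measureReal_def]
  unfold sVal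
  rw [key, Finset.mul_sum]
  refine Finset.sum_congr rfl fun a _ => ?_
  rw [inducedDist_eq_cell, mul_assoc]

end PerT
section PayApprox
variable {n m : ℕ} {c : ℕ → ℝ} {v : Item n m → ℝ} {α : Fin n → ℝ} {ε : ℝ}

lemma sPay_approx (M : Mech) (hc0 : ∀ k, 0 ≤ c k) (hc1 : ∀ k, c k ≤ 1) (hε : 0 < ε)
    (i : Fin n) :
    |sPay M c v ε α i - ∑ a : Alloc n m,
        inducedDist v ε α a * pay M c (fun x => α x.1 * v x) a i|
      ≤ (2 * (n * m) : ℝ) * ε := by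
  set bbar : Item n m → ℝ := fun x => α x.1 * v x with hbbar
  set C : ℝ := (2 * (n * m) : ℝ) * ε with hC
  have hC0 : 0 ≤ C := by positivity
  have hcont : ∀ a : Alloc n m, Continuous fun ξ : Item n m → ℝ => pay M c (pert α v ξ) a i :=
    fun a => (pay_cont M hc0 hc1 a i).comp (continuous_pert α v)
  have hdiff : ∀ (a : Alloc n m) (ξ : Item n m → ℝ), ξ ∈ cell n m ε α v a →
      |pay M c (pert α v ξ) a i - pay M c bbar a i| ≤ C := by
    intro a ξ hξ
    obtain ⟨_, _, hbox⟩ := mem_cell hξ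
    refine pay_lip M hc0 hc1 a i hε.le fun x => ?_
    have h1 := (hbox x).1
    have h2 := (hbox x).2
    have : pert α v ξ x - bbar x = ξ x := by unfold pert; simp [hbbar]
    rw [this, abs_of_nonneg h1]
    exact h2
  have hint : ∀ a : Alloc n m,
      IntegrableOn (fun ξ => pay M c (pert α v ξ) a i) (cell n m ε α v a) (cube n m ε) := by
    intro a
    refine ⟨(hcont a).aestronglyMeasurable.restrict, ?_⟩
    refine MeasureTheory.HasFiniteIntegral.of_bounded
      (C := |pay M c bbar a i| + C) ?_
    refine (MeasureTheory.ae_restrict_mem (cell_measurable ε α v a)).mono fun ξ hξ => ?_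
    have := hdiff a ξ hξ
    have h2 : |pay M c (pert α v ξ) a i| ≤ |pay M c bbar a i| + C := by
      have := abs_sub_abs_le_abs_sub (pay M c (pert α v ξ) a i) (pay M c bbar a i)
      linarith
    simpa [Real.norm_eq_abs] using h2
  have hintBid : ∀ a : Alloc n m,
      IntegrableOn (fun ξ => payBid M c (pert α v ξ) i) (cell n m ε α v a) (cube n m ε) := by
    intro a
    refine IntegrableOn.congr_fun (hint a) ?_ (cell_measurable ε α v a)
    intro ξ hξ
    obtain ⟨hinj, hva, _⟩ := mem_cell hξ
    exact (payBid_eq M hinj hva i).symm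
  have key : ∫ ξ, payBid M c (pert α v ξ) i ∂(cube n m ε)
      = ∑ a : Alloc n m, ∫ ξ in cell n m ε α v a, pay M c (pert α v ξ) a i ∂(cube n m ε) := by
    conv_lhs => rw [← restrict_cells ε α v]
    rw [MeasureTheory.integral_iUnion_fintype (cell_measurable ε α v)
      (cell_disjoint ε α v) hintBid]
    refine Finset.sum_congr rfl fun a _ => ?_
    refine setIntegral_congr_fun (cell_measurable ε α v a) fun ξ hξ => ?_
    obtain ⟨hinj, hva, _⟩ := mem_cell hξ
    exact payBid_eq M hinj hva i
  have perA : ∀ a : Alloc n m,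
      |(∫ ξ in cell n m ε α v a, pay M c (pert α v ξ) a i ∂(cube n m ε))
        - (cube n m ε (cell n m ε α v a)).toReal * pay M c bbar a i|
      ≤ C * (cube n m ε (cell n m ε α v a)).toReal := by
    intro a
    have hconst : IntegrableOn (fun _ : Item n m → ℝ => pay M c bbar a i)
        (cell n m ε α v a) (cube n m ε) :=
      integrableOn_const (measure_lt_top _ _).ne
    have hsub : (∫ ξ in cell n m ε α v a, pay M c (pert α v ξ) a i ∂(cube n m ε))
        - (cube n m ε (cell n m ε α v a)).toReal * pay M c bbar a i
        = ∫ ξ in cell n m ε α v a,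
            (pay M c (pert α v ξ) a i - pay M c bbar a i) ∂(cube n m ε) := by
      rw [MeasureTheory.integral_sub (hint a) hconst, setIntegral_const, smul_eq_mul, measureReal_def]
    rw [hsub]
    have := MeasureTheory.norm_setIntegral_le_of_norm_le_const
      (μ := cube n m ε) (s := cell n m ε α v a)
      (f := fun ξ => pay M c (pert α v ξ) a i - pay M c bbar a i)
      (measure_lt_top _ _)
      (fun ξ hξ => by simpa [Real.norm_eq_abs] using hdiff a ξ hξ)
    simpa [Real.norm_eq_abs, measureReal_def] using this
  unfold sPay
  rw [key]
  have hid : ∀ a : Alloc n m, inducedDist v ε α a * pay M c bbar a i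
      = (ε ^ (n * m))⁻¹ * ((cube n m ε (cell n m ε α v a)).toReal * pay M c bbar a i) := by
    intro a
    rw [inducedDist_eq_cell, mul_assoc]
  rw [Finset.sum_congr rfl fun a _ => hid a, ← Finset.mul_sum, ← mul_sub,
    ← Finset.sum_sub_distrib]
  rw [abs_mul, abs_of_nonneg (by positivity : (0:ℝ) ≤ (ε ^ (n * m))⁻¹)]
  calc (ε ^ (n * m))⁻¹ * |∑ a : Alloc n m,
        ((∫ ξ in cell n m ε α v a, pay M c (pert α v ξ) a i ∂(cube n m ε))
          - (cube n m ε (cell n m ε α v a)).toReal * pay M c bbar a i)|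
      ≤ (ε ^ (n * m))⁻¹ * ∑ a : Alloc n m, (C * (cube n m ε (cell n m ε α v a)).toReal) := by
        refine mul_le_mul_of_nonneg_left ?_ (by positivity)
        exact (Finset.abs_sum_le_sum_abs _ _).trans (Finset.sum_le_sum fun a _ => perA a)
    _ = (ε ^ (n * m))⁻¹ * (C * ε ^ (n * m)) := by
        rw [← Finset.mul_sum, sum_cells_toReal hε.le]
    _ = C := by
        field_simp
  
end PayApprox

/-- The limit of smoothed autobidding equilibria (with vanishing noise) is an
autobidding equilibrium of the original auction. -/
theorem limit_of_smoothed_equilibria_is_equilibrium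
    (n m K : ℕ) (v : Item n m → ℝ) (c : ℕ → ℝ) (A : ℝ)
    (hv : ∀ x : Item n m, 0 ≤ v x)
    (hvmono : ∀ (i : Fin n) (j j' : Fin m), j ≤ j' → v (i, j') ≤ v (i, j))
    (hc1 : c 0 ≤ 1) (hc0 : ∀ k, 0 ≤ c k) (hcmono : Antitone c)
    (hcK : ∀ k, K ≤ k → c k = 0)
    (hA : 1 ≤ A) (M : Mech)
    (εseq : ℕ → ℝ) (hεpos : ∀ t, 0 < εseq t)
    (hεlim : Filter.Tendsto εseq Filter.atTop (nhds 0))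
    (αseq : ℕ → Fin n → ℝ) (hαmem : ∀ t i, αseq t i ∈ Set.Icc 1 A)
    (hroiSeq : ∀ t (i : Fin n),
      sPay M c v (εseq t) (αseq t) i - εseq t * m ≤ sVal c v (εseq t) (αseq t) i)
    (hmaxSeq : ∀ t (i : Fin n),
      sPay M c v (εseq t) (αseq t) i < sVal c v (εseq t) (αseq t) i → αseq t i = A)
    (αstar : Fin n → ℝ)
    (hαlim : ∀ i : Fin n,
      Filter.Tendsto (fun t => αseq t i) Filter.atTop (nhds (αstar i)))
    (πstar : Alloc n m → ℝ)
    (hπlim : ∀ a : Alloc n m,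
      Filter.Tendsto (fun t => inducedDist v (εseq t) (αseq t) a) Filter.atTop
        (nhds (πstar a))) :
    (∀ a, 0 ≤ πstar a) ∧ (∑ a : Alloc n m, πstar a = 1) ∧
    (∀ a : Alloc n m, 0 < πstar a → ValidUnder (fun x => αstar x.1 * v x) a) ∧
    (∀ i : Fin n,
      ∑ a : Alloc n m, πstar a * pay M c (fun x => αstar x.1 * v x) a i
        ≤ ∑ a : Alloc n m, πstar a * bidderValue c v a i) ∧
    (∀ i : Fin n,
      (∑ a : Alloc n m, πstar a * pay M c (fun x => αstar x.1 * v x) a i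
        < ∑ a : Alloc n m, πstar a * bidderValue c v a i) → αstar i = A) := by
  have hc1' : ∀ k, c k ≤ 1 := fun k => (hcmono (Nat.zero_le k)).trans hc1
  -- Part 1
  have part1 : ∀ a, 0 ≤ πstar a := fun a =>
    ge_of_tendsto' (hπlim a) fun t => inducedDist_nonneg (hεpos t) a
  -- Part 2
  have part2 : ∑ a : Alloc n m, πstar a = 1 := by
    have hsum : Filter.Tendsto (fun t => ∑ a : Alloc n m, inducedDist v (εseq t) (αseq t) a)
        Filter.atTop (nhds (∑ a : Alloc n m, πstar a)) :=
      tendsto_finset_sum _ fun a _ => hπlim a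
    have hone : (fun t => ∑ a : Alloc n m, inducedDist v (εseq t) (αseq t) a)
        = fun _ => (1 : ℝ) := funext fun t => sum_inducedDist (hεpos t)
    rw [hone] at hsum
    exact tendsto_nhds_unique hsum tendsto_const_nhds
  -- Part 3
  have part3 : ∀ a : Alloc n m, 0 < πstar a → ValidUnder (fun x => αstar x.1 * v x) a := by
    intro a hpos k k' hkk'
    have hev : ∀ᶠ t in Filter.atTop, 0 < inducedDist v (εseq t) (αseq t) a :=
      (hπlim a).eventually (eventually_gt_nhds hpos)
    have hev2 : ∀ᶠ t in Filter.atTop,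
        αseq t (a k').1 * v (a k') ≤ αseq t (a k).1 * v (a k) + εseq t := by
      refine hev.mono fun t ht => ?_
      rw [inducedDist_eq_cell] at ht
      have hne : cube n m (εseq t) (cell n m (εseq t) (αseq t) v a) ≠ 0 := by
        intro h0
        rw [h0] at ht
        simp at ht
      obtain ⟨ξ, hξ⟩ := MeasureTheory.nonempty_of_measure_ne_zero hne
      obtain ⟨_, hva, hbox⟩ := mem_cell hξ
      have h1 := hva k k' hkk'
      unfold pert at h1
      have h2 := (hbox (a k')).1
      have h3 := (hbox (a k)).2
      linarith
    have hlim1 : Filter.Tendsto (fun t => αseq t (a k').1 * v (a k'))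
        Filter.atTop (nhds (αstar (a k').1 * v (a k'))) := (hαlim _).mul_const _
    have hlim2 : Filter.Tendsto (fun t => αseq t (a k).1 * v (a k) + εseq t)
        Filter.atTop (nhds (αstar (a k).1 * v (a k) + 0)) :=
      ((hαlim _).mul_const _).add hεlim
    have := le_of_tendsto_of_tendsto hlim1 hlim2 hev2
    simpa using this
  -- Limits for parts 4 and 5
  have hblim : Filter.Tendsto (fun t => (fun x : Item n m => αseq t x.1 * v x))
      Filter.atTop (nhds (fun x : Item n m => αstar x.1 * v x)) :=
    tendsto_pi_nhds.mpr fun x => (hαlim x.1).mul_const (v x)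
  have hpaylim : ∀ (a : Alloc n m) (i : Fin n),
      Filter.Tendsto (fun t => pay M c (fun x : Item n m => αseq t x.1 * v x) a i)
        Filter.atTop (nhds (pay M c (fun x : Item n m => αstar x.1 * v x) a i)) :=
    fun a i => ((pay_cont M hc0 hc1' a i).tendsto _).comp hblim
  have hGlim : ∀ i : Fin n, Filter.Tendsto
      (fun t => ∑ a : Alloc n m, inducedDist v (εseq t) (αseq t) a
        * pay M c (fun x : Item n m => αseq t x.1 * v x) a i)
      Filter.atTop
      (nhds (∑ a : Alloc n m, πstar a * pay M c (fun x : Item n m => αstar x.1 * v x) a i)) :=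
    fun i => tendsto_finset_sum _ fun a _ => (hπlim a).mul (hpaylim a i)
  have hVlim : ∀ i : Fin n, Filter.Tendsto
      (fun t => ∑ a : Alloc n m, inducedDist v (εseq t) (αseq t) a * bidderValue c v a i)
      Filter.atTop (nhds (∑ a : Alloc n m, πstar a * bidderValue c v a i)) :=
    fun i => tendsto_finset_sum _ fun a _ => (hπlim a).mul_const _
  have hValEq : ∀ t (i : Fin n), sVal c v (εseq t) (αseq t) i
      = ∑ a : Alloc n m, inducedDist v (εseq t) (αseq t) a * bidderValue c v a i :=
    fun t i => sVal_eq (hεpos t) i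
  have hPayBnd : ∀ t (i : Fin n),
      |sPay M c v (εseq t) (αseq t) i - ∑ a : Alloc n m,
        inducedDist v (εseq t) (αseq t) a
          * pay M c (fun x : Item n m => αseq t x.1 * v x) a i|
      ≤ (2 * (n * m) : ℝ) * εseq t :=
    fun t i => sPay_approx M hc0 hc1' (hεpos t) i
  -- Part 4
  have part4 : ∀ i : Fin n,
      ∑ a : Alloc n m, πstar a * pay M c (fun x => αstar x.1 * v x) a i
        ≤ ∑ a : Alloc n m, πstar a * bidderValue c v a i := by
    intro i
    have hineq : ∀ t,
        (∑ a : Alloc n m, inducedDist v (εseq t) (αseq t) a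
          * pay M c (fun x : Item n m => αseq t x.1 * v x) a i)
          - (2 * (n * m) : ℝ) * εseq t - εseq t * m
        ≤ ∑ a : Alloc n m, inducedDist v (εseq t) (αseq t) a * bidderValue c v a i := by
      intro t
      have h1 := hroiSeq t i
      have h2 := (abs_le.mp (hPayBnd t i)).1
      have h3 := hValEq t i
      push_cast at h1 h2 h3 ⊢
      linarith
    have hL : Filter.Tendsto
        (fun t => (∑ a : Alloc n m, inducedDist v (εseq t) (αseq t) a
          * pay M c (fun x : Item n m => αseq t x.1 * v x) a i)
          - (2 * (n * m) : ℝ) * εseq t - εseq t * m)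
        Filter.atTop
        (nhds ((∑ a : Alloc n m, πstar a * pay M c (fun x : Item n m => αstar x.1 * v x) a i)
          - (2 * (n * m) : ℝ) * 0 - 0 * m)) :=
      ((hGlim i).sub (hεlim.const_mul _)).sub (hεlim.mul_const _)
    have := le_of_tendsto_of_tendsto hL (hVlim i) (Filter.Eventually.of_forall hineq)
    simpa using this
  refine ⟨part1, part2, part3, part4, ?_⟩
  -- Part 5
  intro i hlt
  set P : ℝ := ∑ a : Alloc n m, πstar a * pay M c (fun x => αstar x.1 * v x) a i with hP
  set V : ℝ := ∑ a : Alloc n m, πstar a * bidderValue c v a i with hV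
  have hUlim : Filter.Tendsto
      (fun t => (∑ a : Alloc n m, inducedDist v (εseq t) (αseq t) a
        * pay M c (fun x : Item n m => αseq t x.1 * v x) a i)
        + (2 * (n * m) : ℝ) * εseq t)
      Filter.atTop (nhds (P + (2 * (n * m) : ℝ) * 0)) :=
    (hGlim i).add (hεlim.const_mul _)
  rw [mul_zero, add_zero] at hUlim
  have hmid : P < (P + V) / 2 ∧ (P + V) / 2 < V := by constructor <;> linarith
  have hev1 : ∀ᶠ t in Filter.atTop,
      (∑ a : Alloc n m, inducedDist v (εseq t) (αseq t) a
        * pay M c (fun x : Item n m => αseq t x.1 * v x) a i)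
        + (2 * (n * m) : ℝ) * εseq t < (P + V) / 2 :=
    hUlim.eventually (eventually_lt_nhds hmid.1)
  have hev2 : ∀ᶠ t in Filter.atTop,
      (P + V) / 2 < ∑ a : Alloc n m, inducedDist v (εseq t) (αseq t) a * bidderValue c v a i :=
    (hVlim i).eventually (eventually_gt_nhds hmid.2)
  have hevA : ∀ᶠ t in Filter.atTop, αseq t i = A := by
    filter_upwards [hev1, hev2] with t h1 h2
    refine hmaxSeq t i ?_
    have hb := (abs_le.mp (hPayBnd t i)).2
    have h3 := hValEq t i
    push_cast at hb h3 h1 h2 ⊢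
    linarith
  have hconst : Filter.Tendsto (fun t => αseq t i) Filter.atTop (nhds A) :=
    Filter.Tendsto.congr' (hevA.mono fun t h => h.symm) tendsto_const_nhds
  exact tendsto_nhds_unique (hαlim i) hconst

end
end SponsoredShopping
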